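/- Let k be a field, m ≠ 0 in k, and suppose X, Y ∈ Sp(4,k) satisfy X·Y·X⁻¹·Y⁻¹ = I + mΔ, where Δ is the matrix with a single 1 in position (1,2). Then X·e₁, Y·e₁, X·Y·e₁ and Y·X·e₁ all lie in e₁^⊥ (the symplectic orthogonal of the first basis vector). -/

import Mathlib

open Matrix

/-- If `X, Y ∈ Sp(4,k)` satisfy `X·Y·X⁻¹·Y⁻¹ = I + m·Δ` with `m ≠ 0`, then
`X·e₁`, `Y·e₁`, `X·Y·e₁`, `Y·X·e₁` all lie in the symplectic orthogonal of `e₁`. -/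
theorem stmt_11 {k : Type*} [Field k] (m : k) (hm : m ≠ 0)
    (J : Matrix (Fin 4) (Fin 4) k)
    (hJ : J = !![0, 1, 0, 0; -1, 0, 0, 0; 0, 0, 0, 1; 0, 0, -1, 0])
    (Δ : Matrix (Fin 4) (Fin 4) k)
    (hΔ : Δ = !![0, 1, 0, 0; 0, 0, 0, 0; 0, 0, 0, 0; 0, 0, 0, 0])
    (e₁ : Fin 4 → k) (he₁ : e₁ = ![1, 0, 0, 0])
    (X Y : Matrix (Fin 4) (Fin 4) k)
    (hX : Xᵀ * J * X = J) (hY : Yᵀ * J * Y = J)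
    (hcomm : X * Y * X⁻¹ * Y⁻¹ = 1 + m • Δ) :
    e₁ ⬝ᵥ (J *ᵥ (X *ᵥ e₁)) = 0 ∧
    e₁ ⬝ᵥ (J *ᵥ (Y *ᵥ e₁)) = 0 ∧
    e₁ ⬝ᵥ (J *ᵥ ((X * Y) *ᵥ e₁)) = 0 ∧
    e₁ ⬝ᵥ (J *ᵥ ((Y * X) *ᵥ e₁)) = 0 := by
  -- J is invertible with inverse -J
  have hJJ : (-J) * J = 1 := by
    subst hJ
    ext i j
    fin_cases i <;> fin_cases j <;>
      simp [Matrix.mul_apply, Fin.sum_univ_four, Matrix.one_apply,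
        Matrix.vecHead, Matrix.vecTail, Function.comp]
  -- X and Y are invertible
  have hXl : ((-J) * Xᵀ * J) * X = 1 := by
    calc ((-J) * Xᵀ * J) * X = (-J) * (Xᵀ * J * X) := by noncomm_ring
    _ = 1 := by rw [hX, hJJ]
  have hYl : ((-J) * Yᵀ * J) * Y = 1 := by
    calc ((-J) * Yᵀ * J) * Y = (-J) * (Yᵀ * J * Y) := by noncomm_ring
    _ = 1 := by rw [hY, hJJ]
  have hXinv : X⁻¹ = (-J) * Xᵀ * J := Matrix.inv_eq_left_inv hXl
  have hYinv : Y⁻¹ = (-J) * Yᵀ * J := Matrix.inv_eq_left_inv hYl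
  have hXil : X⁻¹ * X = 1 := by rw [hXinv]; exact hXl
  have hYil : Y⁻¹ * Y = 1 := by rw [hYinv]; exact hYl
  have hXir : X * X⁻¹ = 1 := mul_eq_one_comm.mp hXil
  have hYir : Y * Y⁻¹ = 1 := mul_eq_one_comm.mp hYil
  -- key relation without inverses
  have hK : X * Y = (1 + m • Δ) * (Y * X) := by
    have e : X * Y * X⁻¹ * Y⁻¹ * (Y * X) = X * Y := by
      rw [mul_assoc (X * Y * X⁻¹) Y⁻¹ (Y * X), ← mul_assoc Y⁻¹ Y X, hYil, one_mul,
        mul_assoc (X * Y) X⁻¹ X, hXil, mul_one]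
    rw [← e, hcomm]
  -- trace helper
  have hA : ∀ W : Matrix (Fin 4) (Fin 4) k,
      ((1 + m • Δ) * W).trace = W.trace + m * W 1 0 := by
    intro W
    have : (Δ * W).trace = W 1 0 := by
      simp [Matrix.trace, Matrix.diag, Matrix.mul_apply, hΔ, Fin.sum_univ_four]
    rw [add_mul, one_mul, Matrix.smul_mul, trace_add, trace_smul, this, smul_eq_mul]
  -- entry helper
  have hB : ∀ W : Matrix (Fin 4) (Fin 4) k,
      ((1 + m • Δ) * W) 1 0 = W 1 0 := by
    intro W
    simp only [add_mul, Matrix.add_apply, Matrix.smul_mul, Matrix.smul_apply,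
      one_mul, smul_eq_mul]
    have h0 : (Δ * W) 1 0 = 0 := by
      norm_num [Matrix.mul_apply, hΔ, Fin.sum_univ_four,
        Matrix.head_zero, Matrix.tail_zero, Matrix.head_cons, Matrix.tail_cons,
          Matrix.cons_val_two, Matrix.cons_val_three, Matrix.vecHead, Matrix.vecTail]
    rw [h0, mul_zero, add_zero]
  -- (Y*X) 1 0 = 0
  have hYX : (Y * X) 1 0 = 0 := by
    have := congrArg Matrix.trace hK
    rw [hA, Matrix.trace_mul_comm] at this
    have hmc : m * (Y * X) 1 0 = 0 := left_eq_add.mp this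
    exact (mul_eq_zero.mp hmc).resolve_left hm
  -- (X*Y) 1 0 = 0
  have hXY : (X * Y) 1 0 = 0 := by rw [hK, hB]; exact hYX
  -- X 1 0 = 0
  have hX10 : X 1 0 = 0 := by
    have heq : X = (1 + m • Δ) * (Y * X * Y⁻¹) := by
      calc X = X * (Y * Y⁻¹) := by rw [hYir, mul_one]
      _ = (X * Y) * Y⁻¹ := by rw [mul_assoc]
      _ = (1 + m • Δ) * (Y * X * Y⁻¹) := by rw [hK]; noncomm_ring
    have htr := congrArg Matrix.trace heq
    rw [hA] at htr
    have htr2 : (Y * X * Y⁻¹).trace = X.trace := by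
      rw [mul_assoc, Matrix.trace_mul_comm, mul_assoc, hYil, mul_one]
    rw [htr2] at htr
    have hmc : m * (Y * X * Y⁻¹) 1 0 = 0 := left_eq_add.mp htr
    have h0 : (Y * X * Y⁻¹) 1 0 = 0 := (mul_eq_zero.mp hmc).resolve_left hm
    rw [heq, hB, h0]
  -- Y 1 0 = 0
  have hY10 : Y 1 0 = 0 := by
    have heq : X * Y * X⁻¹ = (1 + m • Δ) * Y := by
      calc X * Y * X⁻¹ = (1 + m • Δ) * (Y * X) * X⁻¹ := by rw [hK]
      _ = (1 + m • Δ) * (Y * (X * X⁻¹)) := by noncomm_ring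
      _ = (1 + m • Δ) * Y := by rw [hXir, mul_one]
    have htr := congrArg Matrix.trace heq
    rw [hA] at htr
    have htr2 : (X * Y * X⁻¹).trace = Y.trace := by
      rw [Matrix.trace_mul_comm, ← mul_assoc, hXil, one_mul]
    rw [htr2] at htr
    have hmc : m * Y 1 0 = 0 := left_eq_add.mp htr
    exact (mul_eq_zero.mp hmc).resolve_left hm
  -- reduce goals to entries
  subst hJ he₁
  refine ⟨?_, ?_, ?_, ?_⟩ <;>
    simp [dotProduct, Matrix.mulVec, Matrix.vecMul, Fin.sum_univ_four,
      Matrix.vecHead, Matrix.vecTail, Function.comp] <;>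
    assumption
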